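/- In the group of 3×3 upper unitriangular matrices over ℤ with A = !![1,1,0; 0,1,0; 0,0,1], B = !![1,0,0; 0,1,1; 0,0,1], C = !![1,0,1; 0,1,0; 0,0,1], the subgroup ⟨C⟩ is not undistorted in the group generated by {A, B, C}: there is no constant D such that every element h of ⟨C⟩ satisfies ℓ_{{C}}(h) ≤ D · ℓ_{{A,B,C}}(h). -/

import Mathlib

open Pointwise

/-- The word length of `g` with respect to a generating set `S`: the least length of a list
of elements of `S ∪ S⁻¹` whose product is `g`. -/
noncomputable def wordLength {G : Type*} [Group G] (S : Set G) (g : G) : ℕ :=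
  sInf {n : ℕ | ∃ l : List G, (∀ x ∈ l, x ∈ S ∪ S⁻¹) ∧ l.prod = g ∧ l.length = n}

/-- The generator `A = !![1,1,0; 0,1,0; 0,0,1]` of the integer Heisenberg group, as a unit
of the ring of 3×3 integer matrices. -/
def heisA : (Matrix (Fin 3) (Fin 3) ℤ)ˣ where
  val := !![1,1,0; 0,1,0; 0,0,1]
  inv := !![1,-1,0; 0,1,0; 0,0,1]
  val_inv := by simp [Matrix.mul_fin_three, ← Matrix.one_fin_three]
  inv_val := by simp [Matrix.mul_fin_three, ← Matrix.one_fin_three]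

/-- The generator `B = !![1,0,0; 0,1,1; 0,0,1]` of the integer Heisenberg group. -/
def heisB : (Matrix (Fin 3) (Fin 3) ℤ)ˣ where
  val := !![1,0,0; 0,1,1; 0,0,1]
  inv := !![1,0,0; 0,1,-1; 0,0,1]
  val_inv := by simp [Matrix.mul_fin_three, ← Matrix.one_fin_three]
  inv_val := by simp [Matrix.mul_fin_three, ← Matrix.one_fin_three]

/-- The central element `C = !![1,0,1; 0,1,0; 0,0,1]` of the integer Heisenberg group. -/
def heisC : (Matrix (Fin 3) (Fin 3) ℤ)ˣ where
  val := !![1,0,1; 0,1,0; 0,0,1]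
  inv := !![1,0,-1; 0,1,0; 0,0,1]
  val_inv := by simp [Matrix.mul_fin_three, ← Matrix.one_fin_three]
  inv_val := by simp [Matrix.mul_fin_three, ← Matrix.one_fin_three]

lemma heisA_pow (n : ℕ) : (heisA ^ n).val = !![1,(n:ℤ),0; 0,1,0; 0,0,1] := by
  induction n with
  | zero => simp [← Matrix.one_fin_three]
  | succ k ih =>
    rw [pow_succ, Units.val_mul, ih]
    simp [heisA, Matrix.mul_fin_three, ← Matrix.one_fin_three]
    ring

lemma heisAinv_pow (n : ℕ) : ((heisA⁻¹) ^ n).val = !![1,-(n:ℤ),0; 0,1,0; 0,0,1] := by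
  induction n with
  | zero => simp [← Matrix.one_fin_three]
  | succ k ih =>
    rw [pow_succ, Units.val_mul, ih]
    show _ * heisA.inv = _
    simp [heisA, Matrix.mul_fin_three]

lemma heisB_pow (n : ℕ) : (heisB ^ n).val = !![1,0,0; 0,1,(n:ℤ); 0,0,1] := by
  induction n with
  | zero => simp [← Matrix.one_fin_three]
  | succ k ih =>
    rw [pow_succ, Units.val_mul, ih]
    simp [heisB, Matrix.mul_fin_three, ← Matrix.one_fin_three]
    ring

lemma heisBinv_pow (n : ℕ) : ((heisB⁻¹) ^ n).val = !![1,0,0; 0,1,-(n:ℤ); 0,0,1] := by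
  induction n with
  | zero => simp [← Matrix.one_fin_three]
  | succ k ih =>
    rw [pow_succ, Units.val_mul, ih]
    show _ * heisB.inv = _
    simp [heisB, Matrix.mul_fin_three]

lemma heisC_zpow (z : ℤ) : (heisC ^ z).val = !![1,0,(z:ℤ); 0,1,0; 0,0,1] := by
  induction z using Int.induction_on with
  | zero => simp [← Matrix.one_fin_three]
  | succ k ih =>
    rw [zpow_add_one, Units.val_mul, ih]
    simp [heisC, Matrix.mul_fin_three]
    push_cast; ring
  | pred k ih =>
    rw [zpow_sub_one, Units.val_mul, ih]
    show _ * heisC.inv = _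
    simp [heisC, Matrix.mul_fin_three]
    push_cast; ring

lemma heisC_zpow_inj {z w : ℤ} (h : heisC ^ z = heisC ^ w) : z = w := by
  have := congrArg (fun u : (Matrix (Fin 3) (Fin 3) ℤ)ˣ => u.val 0 2) h
  simp only [heisC_zpow] at this
  simpa using this

lemma list_C_prod (l : List (Matrix (Fin 3) (Fin 3) ℤ)ˣ)
    (h : ∀ x ∈ l, x ∈ ({heisC} : Set (Matrix (Fin 3) (Fin 3) ℤ)ˣ) ∪
      ({heisC} : Set (Matrix (Fin 3) (Fin 3) ℤ)ˣ)⁻¹) :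
    ∃ z : ℤ, l.prod = heisC ^ z ∧ z.natAbs ≤ l.length := by
  induction l with
  | nil => exact ⟨0, by simp⟩
  | cons a t ih =>
    obtain ⟨z, hz, hlen⟩ := ih (fun x hx => h x (List.mem_cons_of_mem a hx))
    have ha := h a List.mem_cons_self
    rcases ha with ha | ha
    · refine ⟨z + 1, ?_, ?_⟩
      · rw [List.prod_cons, hz, Set.mem_singleton_iff.mp ha, add_comm, zpow_add, zpow_one]
      · simp only [List.length_cons]
        omega
    · have ha' : a = heisC⁻¹ := by
        have : a⁻¹ = heisC := Set.mem_singleton_iff.mp ha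
        rw [← this, inv_inv]
      refine ⟨z - 1, ?_, ?_⟩
      · rw [List.prod_cons, hz, ha', sub_eq_add_neg, add_comm, zpow_add, zpow_neg, zpow_one]
      · simp only [List.length_cons]
        omega

lemma heis_comm (n : ℕ) :
    heisA ^ n * heisB ^ n * (heisA⁻¹) ^ n * (heisB⁻¹) ^ n = heisC ^ ((n ^ 2 : ℕ) : ℤ) := by
  apply Units.ext
  rw [heisC_zpow]
  simp only [Units.val_mul, heisA_pow, heisB_pow, heisAinv_pow, heisBinv_pow]
  simp [Matrix.mul_fin_three]
  push_cast; ring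

set_option maxHeartbeats 1600000 in
/-- In the integer Heisenberg group of 3×3 unitriangular matrices, the center `⟨C⟩` is not
undistorted in the group generated by `{A, B, C}`: there is no constant `D` with
`ℓ_{C}(h) ≤ D * ℓ_{A,B,C}(h)` for every `h ∈ ⟨C⟩`. -/
theorem heisenberg_center_not_undistorted :
    ¬ ∃ D : ℕ, ∀ h ∈ Subgroup.closure ({heisC} : Set (Matrix (Fin 3) (Fin 3) ℤ)ˣ),
        wordLength ({heisC} : Set (Matrix (Fin 3) (Fin 3) ℤ)ˣ) h ≤
          D * wordLength ({heisA, heisB, heisC} : Set (Matrix (Fin 3) (Fin 3) ℤ)ˣ) h := by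
  rintro ⟨D, hD⟩
  set n : ℕ := 4 * D + 1 with hn
  set h : (Matrix (Fin 3) (Fin 3) ℤ)ˣ := heisC ^ ((n ^ 2 : ℕ) : ℤ) with hh
  have hmem : h ∈ Subgroup.closure ({heisC} : Set (Matrix (Fin 3) (Fin 3) ℤ)ˣ) :=
    Subgroup.zpow_mem _ (Subgroup.subset_closure (Set.mem_singleton _)) _
  -- upper bound: wordLength_{A,B,C}(h) ≤ 4n via the commutator word
  have hupper : wordLength ({heisA, heisB, heisC} : Set (Matrix (Fin 3) (Fin 3) ℤ)ˣ) h ≤ 4 * n := by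
    apply Nat.sInf_le
    refine ⟨List.replicate n heisA ++ List.replicate n heisB ++
      List.replicate n heisA⁻¹ ++ List.replicate n heisB⁻¹, ?_, ?_, by simp; ring⟩
    · intro x hx
      simp only [List.mem_append, List.mem_replicate] at hx
      rcases hx with ((⟨_, rfl⟩ | ⟨_, rfl⟩) | ⟨_, rfl⟩) | ⟨_, rfl⟩
      · exact Or.inl (by simp)
      · exact Or.inl (by simp)
      · exact Or.inr (by simp [Set.mem_inv])
      · exact Or.inr (by simp [Set.mem_inv])
    · simp only [List.prod_append, List.prod_replicate]
      rw [hh]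
      exact heis_comm n
  -- lower bound: wordLength_{C}(h) ≥ n²
  have hlower : (n ^ 2 : ℕ) ≤ wordLength ({heisC} : Set (Matrix (Fin 3) (Fin 3) ℤ)ˣ) h := by
    have hne : {m : ℕ | ∃ l : List (Matrix (Fin 3) (Fin 3) ℤ)ˣ,
        (∀ x ∈ l, x ∈ ({heisC} : Set (Matrix (Fin 3) (Fin 3) ℤ)ˣ) ∪
          ({heisC} : Set (Matrix (Fin 3) (Fin 3) ℤ)ˣ)⁻¹) ∧ l.prod = h ∧ l.length = m}.Nonempty := by
      refine ⟨n ^ 2, List.replicate (n ^ 2) heisC, ?_, ?_, by simp⟩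
      · intro x hx
        exact Or.inl (by simp [(List.mem_replicate.mp hx).2])
      · rw [List.prod_replicate, hh, zpow_natCast]
    obtain ⟨l, hl, hprod, hlen⟩ := Nat.sInf_mem hne
    obtain ⟨z, hz, hzlen⟩ := list_C_prod l hl
    rw [hprod, hh] at hz
    have : ((n ^ 2 : ℕ) : ℤ) = z := heisC_zpow_inj hz
    rw [wordLength, ← hlen]
    omega
  have := hD h hmem
  have hfinal : (n ^ 2 : ℕ) ≤ D * (4 * n) :=
    le_trans hlower (le_trans this (Nat.mul_le_mul_left D hupper))
  nlinarith [hfinal, hn]
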